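/- arXiv:0804.2035 — 2 statements merged into one kernel-verified Lean document; each statement's English description precedes it below -/
import Mathlib

section
/- Let f : U → P*(S^(n)), U ∈ P*(S^(m)), be a time-invariant system which is non-anticipatory in the first sense. Define Û = {u ∈ U ∩ S₀^(m) : f(u) ∩ S₀^(n) ≠ ∅} (which is nonempty) and f̂ : Û → P*(S^(n)) by f̂(u) = f(u) ∩ S₀^(n). Then: (iii) for all d ∈ ℝ, u ∈ Û and x, if x ∈ f̂(u) and u∘τ^d ∈ Û, then x∘τ^d ∈ f̂(u∘τ^d); moreover f̂ is non-anticipatory in the first sense. -/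
open Set
open scoped Classical

/-- `B^n`, the set of binary vectors of length `n`. -/
abbrev BV (n : ℕ) := Fin n → Bool

/-- `x : ℝ → α` is a signal: it has an initial value and a strictly increasing,
unbounded-from-above sequence of time instants on whose half-open intervals it is constant. -/
def IsSignal {α : Type*} (x : ℝ → α) : Prop :=
  ∃ (a : α) (t : ℕ → ℝ), StrictMono t ∧ (∀ M : ℝ, ∃ k, M < t k) ∧
    (∀ s, s < t 0 → x s = a) ∧
    (∀ k : ℕ, ∀ s, t k ≤ s → s < t (k + 1) → x s = x (t k))

/-- The set of signals with values in `α`. -/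
def Sig (α : Type*) : Set (ℝ → α) := {x | IsSignal x}

/-- The left limit `x(t-0)`: the common value of `x` on `(t-ε, t)` for small `ε > 0`
(junk value `x t` if no such common value exists). -/
noncomputable def leftLim {α : Type*} (x : ℝ → α) (t : ℝ) : α :=
  if h : ∃ v, ∃ ε, 0 < ε ∧ ∀ s, t - ε < s → s < t → x s = v then h.choose else x t

/-- A constant signal. -/
def IsConstantSig {α : Type*} (x : ℝ → α) : Prop := ∀ s t : ℝ, x s = x t

/-- The first switch time `min {t | x(t-0) ≠ x(t)}` (for a variable signal the
infimum is attained, so it is the minimum). -/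
noncomputable def firstSwitch {α : Type*} (x : ℝ → α) : ℝ :=
  sInf {t | leftLim x t ≠ x t}

/-- Non-anticipation in the first sense: every state is constant, or the input and the
state are both variable and the first input switch is prior to the first state switch. -/
def NonAnticip1 {α β : Type*} (U : Set (ℝ → α)) (f : (ℝ → α) → Set (ℝ → β)) : Prop :=
  ∀ u ∈ U, ∀ x ∈ f u, IsConstantSig x ∨
    (¬ IsConstantSig u ∧ ¬ IsConstantSig x ∧ firstSwitch u ≤ firstSwitch x)

/-- The translation `x ∘ τ^d`, `(x ∘ τ^d)(t) = x(t - d)`. -/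
def tr {α : Type*} (d : ℝ) (x : ℝ → α) : ℝ → α := fun t => x (t - d)

/-- `S₀`: the signals that are constant (equal to their initial value) on `(-∞, 0)`. -/
def Sig0 (α : Type*) : Set (ℝ → α) :=
  {u | IsSignal u ∧ ∀ s, s < (0:ℝ) → ∀ t', t' < (0:ℝ) → u s = u t'}

/-- Time invariance of the system `f` with input set `U`. -/
def TimeInv {α β : Type*} (U : Set (ℝ → α)) (f : (ℝ → α) → Set (ℝ → β)) : Prop :=
  ∀ d : ℝ, ∀ u ∈ U, tr d u ∈ U ∧ ∀ x ∈ f u, tr d x ∈ f (tr d u)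

/-- `f : U → P*(S^(n))` is an asynchronous system: `U` is a nonempty set of signals and
each set of states `f u`, `u ∈ U`, is a nonempty set of signals. -/
def IsSystem {α β : Type*} (U : Set (ℝ → α)) (f : (ℝ → α) → Set (ℝ → β)) : Prop :=
  U.Nonempty ∧ U ⊆ Sig α ∧ ∀ u ∈ U, (f u).Nonempty ∧ f u ⊆ Sig β

/-- Non-anticipation in the second sense: if two inputs coincide on `(-∞, t)`, then the
sets of restrictions of the states to `(-∞, t]` coincide. -/
def NonAnticip2 {α β : Type*} (U : Set (ℝ → α)) (f : (ℝ → α) → Set (ℝ → β)) : Prop :=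
  ∀ t : ℝ, ∀ u ∈ U, ∀ v ∈ U, EqOn u v (Iio t) →
    ((fun x => (Iic t).restrict x) '' f u) = ((fun x => (Iic t).restrict x) '' f v)

lemma leftLim_eq {α : Type*} {x : ℝ → α} {t : ℝ} {v : α} {ε : ℝ} (hε : 0 < ε)
    (h : ∀ s, t - ε < s → s < t → x s = v) : leftLim x t = v := by
  have hex : ∃ v, ∃ ε, 0 < ε ∧ ∀ s, t - ε < s → s < t → x s = v := ⟨v, ε, hε, h⟩
  rw [leftLim, dif_pos hex]
  obtain ⟨ε', hε', h'⟩ := hex.choose_spec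
  have h1 := min_le_left ε ε'
  have h2 := min_le_right ε ε'
  have hδ : 0 < min ε ε' := lt_min hε hε'
  have hs1 : t - ε < t - min ε ε' / 2 := by linarith
  have hs2 : t - ε' < t - min ε ε' / 2 := by linarith
  have hs3 : t - min ε ε' / 2 < t := by linarith
  rw [← h' (t - min ε ε' / 2) hs2 hs3, h (t - min ε ε' / 2) hs1 hs3]

lemma const_of_no_switch {α : Type*} {x : ℝ → α} (hx : IsSignal x) {c : ℝ}
    (h : ∀ t, t < c → leftLim x t = x t) :
    ∀ s, s < c → ∀ t', t' < c → x s = x t' := by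
  obtain ⟨a, t, hmono, hub, h0, hstep⟩ := hx
  have aux1 : ∀ k, t k < c → x (t k) = a := by
    intro k
    induction k with
    | zero =>
      intro hk
      have hl : leftLim x (t 0) = a :=
        leftLim_eq one_pos (fun r _ hr2 => h0 r hr2)
      rw [← h (t 0) hk, hl]
    | succ k ih =>
      intro hk
      have hkc : t k < c := (hmono (Nat.lt_succ_self k)).trans hk
      have hl : leftLim x (t (k+1)) = x (t k) := by
        refine leftLim_eq (ε := t (k+1) - t k) (by linarith [hmono (Nat.lt_succ_self k)]) ?_
        intro r hr1 hr2
        exact hstep k r (by linarith) hr2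
      rw [← h (t (k+1)) hk, hl, ih hkc]
  intro s hs t' ht'
  have aux2 : ∀ s, s < c → x s = a := by
    intro s hs
    by_cases hs0 : s < t 0
    · exact h0 s hs0
    · push_neg at hs0
      have hP : ∃ k, s < t k := hub s
      set k0 := Nat.find hP with hk0
      have hspec : s < t k0 := Nat.find_spec hP
      have k0ne : k0 ≠ 0 := by
        intro h0'; rw [h0'] at hspec; exact absurd hspec (not_lt.mpr hs0)
      obtain ⟨j, hj⟩ := Nat.exists_eq_succ_of_ne_zero k0ne
      have hjlt : ¬ s < t j := Nat.find_min hP (by omega)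
      push_neg at hjlt
      rw [hj] at hspec
      rw [hstep j s hjlt hspec]
      exact aux1 j (lt_of_le_of_lt hjlt hs)
  rw [aux2 s hs, aux2 t' ht']

lemma bddBelow_switch {α : Type*} {x : ℝ → α} (hx : IsSignal x) :
    BddBelow {t | leftLim x t ≠ x t} := by
  obtain ⟨a, t, hmono, hub, h0, hstep⟩ := hx
  refine ⟨t 0, fun s hs => ?_⟩
  by_contra hlt
  push_neg at hlt
  apply hs
  rw [leftLim_eq one_pos (fun r _ hr2 => h0 r (hr2.trans hlt)), h0 s hlt]

lemma switch_nonempty {α : Type*} {x : ℝ → α} (hx : IsSignal x) (hnc : ¬ IsConstantSig x) :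
    {t | leftLim x t ≠ x t}.Nonempty := by
  by_contra h
  rw [Set.not_nonempty_iff_eq_empty] at h
  apply hnc
  intro s t'
  have hall : ∀ r : ℝ, leftLim x r = x r := by
    intro r
    by_contra hr
    exact absurd (h ▸ hr : r ∈ (∅ : Set ℝ)) (Set.notMem_empty r)
  exact const_of_no_switch hx (c := max s t' + 1) (fun r _ => hall r) s
    (by linarith [le_max_left s t'])
    t' (by linarith [le_max_right s t'])

lemma const_le_firstSwitch {α : Type*} {x : ℝ → α} (hx : IsSignal x) (hnc : ¬ IsConstantSig x)
    {c : ℝ} (h : ∀ s, s < c → ∀ t', t' < c → x s = x t') : c ≤ firstSwitch x := by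
  apply le_csInf (switch_nonempty hx hnc)
  intro t ht
  by_contra hlt
  push_neg at hlt
  apply ht
  have : leftLim x t = x t := by
    refine leftLim_eq one_pos (fun r _ hr2 => h r (hr2.trans hlt) t hlt)
  exact this

lemma const_of_firstSwitch_le {α : Type*} {x : ℝ → α} (hx : IsSignal x) {c : ℝ}
    (h : c ≤ firstSwitch x) : ∀ s, s < c → ∀ t', t' < c → x s = x t' := by
  refine const_of_no_switch hx (fun t ht => ?_)
  by_contra hne
  have : firstSwitch x ≤ t := csInf_le (bddBelow_switch hx) hne
  linarith

lemma isSignal_tr {α : Type*} {x : ℝ → α} (hx : IsSignal x) (d : ℝ) : IsSignal (tr d x) := by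
  obtain ⟨a, t, hmono, hub, h0, hstep⟩ := hx
  refine ⟨a, fun k => t k + d, fun i j hij => by simpa using hmono hij, fun M => ?_, ?_, ?_⟩
  · obtain ⟨k, hk⟩ := hub (M - d)
    exact ⟨k, show M < t k + d by linarith⟩
  · intro s hs
    have hs' : s < t 0 + d := hs
    exact h0 (s - d) (by linarith)
  · intro k s h1 h2
    have h1' : t k + d ≤ s := h1
    have h2' : s < t (k+1) + d := h2
    simpa [tr] using hstep k (s - d) (by linarith) (by linarith)

/-- for a time-invariant system `f` that is non-anticipatory in the first sense,
the system `f̂ : Û → P*(S^(n))`, `f̂(u) = f(u) ∩ S₀^(n)`, satisfies property (iii) and is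
non-anticipatory in the first sense. -/
theorem fhat_prop_iii_and_nonAnticip1 {m n : ℕ}
    (U : Set (ℝ → BV m)) (f : (ℝ → BV m) → Set (ℝ → BV n))
    (hsys : IsSystem U f) (hti : TimeInv U f) (hna : NonAnticip1 U f)
    (Uhat : Set (ℝ → BV m))
    (hUhat : Uhat = {u | u ∈ U ∩ Sig0 (BV m) ∧ (f u ∩ Sig0 (BV n)).Nonempty}) :
    (∀ d : ℝ, ∀ u ∈ Uhat, ∀ x ∈ f u ∩ Sig0 (BV n),
        tr d u ∈ Uhat → tr d x ∈ f (tr d u) ∩ Sig0 (BV n)) ∧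
    NonAnticip1 Uhat (fun u => f u ∩ Sig0 (BV n)) := by
  obtain ⟨hUne, hUsig, hf⟩ := hsys
  constructor
  · intro d u hu x hx htd
    rw [hUhat] at hu htd
    obtain ⟨⟨huU, huS0⟩, _⟩ := hu
    obtain ⟨hxf, hxsig, hxneg⟩ := hx
    refine ⟨(hti d u huU).2 x hxf, isSignal_tr hxsig d, ?_⟩
    -- need: tr d x constant on negatives, i.e. x constant on (-∞, -d)
    have key : ∀ a, a < -d → ∀ b, b < -d → x a = x b := by
      by_cases hd : 0 ≤ d
      · intro a ha b hb
        exact hxneg a (by linarith) b (by linarith)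
      · push_neg at hd
        obtain ⟨⟨_, _, hutr⟩, _⟩ := htd
        have hcu : ∀ a, a < -d → ∀ b, b < -d → u a = u b := by
          intro a ha b hb
          have := hutr (a + d) (by linarith) (b + d) (by linarith)
          simpa [tr] using this
        rcases hna u huU x hxf with hconst | ⟨hunc, hxnc, hle⟩
        · intro a _ b _; exact hconst a b
        · have h1 : -d ≤ firstSwitch u :=
            const_le_firstSwitch (hUsig huU) hunc hcu
          exact const_of_firstSwitch_le hxsig (h1.trans hle)
    intro s hs t' ht'
    exact key (s - d) (by linarith) (t' - d) (by linarith)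
  · intro u hu x hx
    rw [hUhat] at hu
    exact hna u hu.1.1 x hx.1
end

section
/- The two notions of non-anticipation are logically independent: (a) the deterministic system f : S^(m) → S defined by f(u)(t) = χ_[0,1)(t) XOR (u₁(t−1)·χ_[1,∞)(t)) (where u₁ is the first coordinate of u and χ_A is the characteristic function of A ⊆ ℝ) is non-anticipatory in the second sense but not non-anticipatory in the first sense; (b) the deterministic system g : S → S defined by g(u) = 1 (the constant signal 1) if u = χ_[0,∞) and g(u) = u otherwise, is non-anticipatory in the first sense but not non-anticipatory in the second sense. -/
open Set
open scoped Classical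

open scoped Classical in
/-- The characteristic function `χ_A : ℝ → B` of a set `A ⊆ ℝ`. -/
noncomputable def chI (A : Set ℝ) : ℝ → Bool := fun t => if t ∈ A then true else false

lemma isSignal_const {α : Type*} (c : α) : IsSignal (fun _ => c) := by
  refine ⟨c, fun k => (k : ℝ), Nat.strictMono_cast, fun M => exists_nat_gt M, ?_, ?_⟩ <;>
    intros <;> rfl

lemma isSignal_chi : IsSignal (chI (Ici (0:ℝ))) := by
  refine ⟨false, fun k => (k : ℝ), Nat.strictMono_cast, fun M => exists_nat_gt M, ?_, ?_⟩
  · intro s hs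
    simp only [Nat.cast_zero] at hs
    simp [chI, not_le.mpr hs]
  · intro k s hks _
    have hk : (0:ℝ) ≤ (k:ℝ) := Nat.cast_nonneg k
    simp [chI, hk.trans hks, hk]

/-- the two notions of non-anticipation are logically independent:
`f(u)(t) = χ_[0,1)(t) ⊕ u₁(t-1)·χ_[1,∞)(t)` is non-anticipatory in the second sense but
not in the first sense, while `g(u) = 1` if `u = χ_[0,∞)`, `g(u) = u` otherwise, is
non-anticipatory in the first sense but not in the second sense. -/
theorem nonAnticip_notions_independent {m : ℕ} (hm : 0 < m)
    (f : (ℝ → BV m) → (ℝ → Bool))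
    (hf : ∀ u t, f u t = xor (chI (Ico (0:ℝ) 1) t) (u (t - 1) ⟨0, hm⟩ && chI (Ici (1:ℝ)) t))
    (g : (ℝ → Bool) → (ℝ → Bool))
    (hg : ∀ u, g u = if u = chI (Ici (0:ℝ)) then (fun _ => true) else u) :
    (∀ t : ℝ, ∀ u v : ℝ → BV m, IsSignal u → IsSignal v →
        EqOn u v (Iio t) → EqOn (f u) (f v) (Iic t)) ∧
    ¬ (∀ u : ℝ → BV m, IsSignal u → IsConstantSig (f u) ∨
        (¬ IsConstantSig u ∧ ¬ IsConstantSig (f u) ∧ firstSwitch u ≤ firstSwitch (f u))) ∧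
    (∀ u : ℝ → Bool, IsSignal u → IsConstantSig (g u) ∨
        (¬ IsConstantSig u ∧ ¬ IsConstantSig (g u) ∧ firstSwitch u ≤ firstSwitch (g u))) ∧
    ¬ (∀ t : ℝ, ∀ u v : ℝ → Bool, IsSignal u → IsSignal v →
        EqOn u v (Iio t) → EqOn (g u) (g v) (Iic t)) := by
  refine ⟨?_, ?_, ?_, ?_⟩
  · -- f is non-anticipatory in the second sense
    intro t u v _ _ heq s hs
    rw [hf, hf]
    rcases lt_or_ge s 1 with h1 | h1
    · simp [chI, not_le.mpr h1]
    · have : s - 1 ∈ Iio t := by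
        have : s - 1 < s := by linarith
        exact lt_of_lt_of_le this hs
      rw [heq this]
  · -- f not non-anticipatory in the first sense
    intro h
    rcases h (fun _ => fun _ => false) (isSignal_const _) with hc | ⟨hv, _⟩
    · have := hc 0 2
      rw [hf, hf] at this
      norm_num [chI] at this
    · exact hv (fun _ _ => rfl)
  · -- g non-anticipatory in the first sense
    intro u hu
    rw [hg]
    by_cases h : u = chI (Ici (0:ℝ))
    · simp only [h, if_pos rfl]
      exact Or.inl (fun _ _ => rfl)
    · simp only [if_neg h]
      by_cases hc : IsConstantSig u
      · exact Or.inl hc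
      · exact Or.inr ⟨hc, hc, le_refl _⟩
  · -- g not non-anticipatory in the second sense
    intro h
    have heq : EqOn (chI (Ici (0:ℝ))) (fun _ => false) (Iio (0:ℝ)) := by
      intro s hs
      simp [chI, not_le.mpr (mem_Iio.mp hs)]
    have := h 0 (chI (Ici (0:ℝ))) (fun _ => false) isSignal_chi (isSignal_const _) heq
      (show (-1:ℝ) ∈ Iic 0 by norm_num)
    rw [hg, hg] at this
    have hne : (fun _ => false : ℝ → Bool) ≠ chI (Ici (0:ℝ)) := by
      intro he
      have := congrFun he 0
      simp [chI] at this
    rw [if_pos rfl, if_neg hne] at this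
    simp at this
end
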